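/- If f is a minterm-transitive Boolean function on n variables, then bs(f) = O(s(f)³), i.e., there is an absolute constant C with bs(f) ≤ C·s(f)³. -/

import Mathlib

/-- Flip the `i`-th bit of `x`. -/
def flipBit {n : ℕ} (x : Fin n → Bool) (i : Fin n) : Fin n → Bool :=
  fun j => if j = i then !x j else x j

/-- Flip all bits of `x` in the block `B`. -/
def flipSet {n : ℕ} (x : Fin n → Bool) (B : Finset (Fin n)) : Fin n → Bool :=
  fun j => if j ∈ B then !x j else x j

/-- Sensitivity of `f` at the input `x`. -/
def sensAt {n : ℕ} (f : (Fin n → Bool) → Bool) (x : Fin n → Bool) : ℕ :=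
  (Finset.univ.filter fun i => f (flipBit x i) ≠ f x).card

/-- Sensitivity of `f`. -/
def sens {n : ℕ} (f : (Fin n → Bool) → Bool) : ℕ :=
  Finset.univ.sup fun x => sensAt f x

/-- 0-sensitivity of `f`: max sensitivity over inputs where `f` is 0. -/
def sens0 {n : ℕ} (f : (Fin n → Bool) → Bool) : ℕ :=
  (Finset.univ.filter fun x => f x = false).sup fun x => sensAt f x

/-- 1-sensitivity of `f`: max sensitivity over inputs where `f` is 1. -/
def sens1 {n : ℕ} (f : (Fin n → Bool) → Bool) : ℕ :=
  (Finset.univ.filter fun x => f x = true).sup fun x => sensAt f x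

/-- Block sensitivity of `f` at `x`: the largest number of pairwise disjoint
nonempty blocks each of whose flips changes the value of `f` at `x`. -/
noncomputable def bsensAt {n : ℕ} (f : (Fin n → Bool) → Bool) (x : Fin n → Bool) : ℕ :=
  sSup {r : ℕ | ∃ B : Fin r → Finset (Fin n),
    (∀ j, (B j).Nonempty ∧ f (flipSet x (B j)) ≠ f x) ∧
    ∀ j j', j ≠ j' → Disjoint (B j) (B j')}

/-- Block sensitivity of `f`. -/
noncomputable def bsens {n : ℕ} (f : (Fin n → Bool) → Bool) : ℕ :=
  Finset.univ.sup fun x => bsensAt f x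

/-- A permutation group on `[n]` is transitive. -/
def IsTransitive {n : ℕ} (G : Subgroup (Equiv.Perm (Fin n))) : Prop :=
  ∀ i j : Fin n, ∃ π ∈ G, π i = j

open Classical in
/-- The minterm-transitive function `p^G` defined by the partial assignment
`p` with support `S`: it is 1 on `x` iff `x` extends some `G`-shift of `p`. -/
noncomputable def mintermFn {n : ℕ} (G : Subgroup (Equiv.Perm (Fin n)))
    (S : Finset (Fin n)) (p : Fin n → Bool) : (Fin n → Bool) → Bool :=
  fun x => decide (∃ π ∈ G, ∀ i ∈ S, x (π i) = p i)

-- Auxiliary lemmas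

section Aux
variable {n : ℕ} {G : Subgroup (Equiv.Perm (Fin n))} {S : Finset (Fin n)} {p : Fin n → Bool}

lemma mintermFn_eq_true_iff (x : Fin n → Bool) :
    mintermFn G S p x = true ↔ ∃ π ∈ G, ∀ i ∈ S, x (π i) = p i := by
  simp [mintermFn]

lemma sensAt_le_sens (f : (Fin n → Bool) → Bool) (x) : sensAt f x ≤ sens f :=
  Finset.le_sup (Finset.mem_univ x)

lemma sens0_le_sens (f : (Fin n → Bool) → Bool) : sens0 f ≤ sens f :=
  Finset.sup_mono (Finset.filter_subset _ _)

lemma sens1_le_sens (f : (Fin n → Bool) → Bool) : sens1 f ≤ sens f :=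
  Finset.sup_mono (Finset.filter_subset _ _)

lemma bsensAt_le (f : (Fin n → Bool) → Bool) (x) : bsensAt f x ≤ n := by
  unfold bsensAt
  refine csSup_le ⟨0, Fin.elim0, fun j => j.elim0, fun j _ _ => j.elim0⟩ ?_
  rintro r ⟨B, h1, h2⟩
  choose g hg using fun j => (h1 j).1
  have hinj : Function.Injective g := by
    intro j j' h
    by_contra hne
    exact (Finset.disjoint_left.mp (h2 j j' hne) (hg j)) (h ▸ hg j')
  simpa using Fintype.card_le_of_injective g hinj

lemma bsens_le (f : (Fin n → Bool) → Bool) : bsens f ≤ n :=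
  Finset.sup_le fun x _ => bsensAt_le f x

lemma count_ge_of_true (v : Bool) (x : Fin n → Bool) (hx : mintermFn G S p x = true) :
    (S.filter fun i => p i = v).card ≤ (Finset.univ.filter fun a => x a = v).card := by
  rw [mintermFn_eq_true_iff] at hx
  obtain ⟨π, -, hπ⟩ := hx
  calc (S.filter fun i => p i = v).card
      = ((S.filter fun i => p i = v).image π).card :=
        (Finset.card_image_of_injective _ π.injective).symm
    _ ≤ _ := by
        apply Finset.card_le_card
        intro a ha
        simp only [Finset.mem_image, Finset.mem_filter] at ha ⊢
        obtain ⟨i, ⟨hiS, hpi⟩, rfl⟩ := ha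
        exact ⟨Finset.mem_univ _, by rw [hπ i hiS, hpi]⟩

end Aux

section Aux2
variable {n : ℕ} {G : Subgroup (Equiv.Perm (Fin n))} {S : Finset (Fin n)} {p : Fin n → Bool}

lemma sens1_ge (v : Bool) :
    (S.filter fun i => p i = v).card ≤ sens1 (mintermFn G S p) := by
  classical
  set f := mintermFn G S p with hf
  set x : Fin n → Bool := fun i => if i ∈ S then p i else !v with hxdef
  have hfx : f x = true := by
    rw [hf, mintermFn_eq_true_iff]
    exact ⟨1, one_mem G, fun i hi => by simp [hxdef, hi]⟩
  have hones : (Finset.univ.filter fun a => x a = v) = S.filter fun i => p i = v := by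
    ext a
    simp only [Finset.mem_filter, Finset.mem_univ, true_and, hxdef]
    by_cases ha : a ∈ S
    · simp [ha]
    · simp [ha]
  have hsensitive : ∀ i ∈ S.filter fun i => p i = v, f (flipBit x i) ≠ f x := by
    intro i hi
    simp only [Finset.mem_filter] at hi
    have hxi : x i = v := by simp [hxdef, hi.1, hi.2]
    have hflip : (Finset.univ.filter fun a => flipBit x i a = v)
        = (Finset.univ.filter fun a => x a = v).erase i := by
      ext a
      simp only [Finset.mem_filter, Finset.mem_univ, true_and, Finset.mem_erase]
      by_cases h : a = i
      · subst h; simp [flipBit, hxi]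
      · simp [flipBit, h]
    have hlt : ((Finset.univ.filter fun a => flipBit x i a = v)).card
        < (S.filter fun i => p i = v).card := by
      rw [hflip, ← hones]
      apply Finset.card_erase_lt_of_mem
      simp only [Finset.mem_filter, Finset.mem_univ, true_and]
      exact hxi
    intro hcontra
    rw [hfx] at hcontra
    have hcontra' : f (flipBit x i) = true := by
      cases hh : f (flipBit x i) <;> simp_all
    have := count_ge_of_true (G := G) (S := S) (p := p) v (flipBit x i) hcontra'
    omega
  calc (S.filter fun i => p i = v).card ≤ sensAt f x := by
        apply Finset.card_le_card
        intro i hi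
        simp only [Finset.mem_filter, Finset.mem_univ, true_and]
        exact hsensitive i hi
    _ ≤ sens1 f := Finset.le_sup (by simp [hfx])

lemma card_le_two_sens1 : S.card ≤ 2 * sens1 (mintermFn G S p) := by
  classical
  have h1 := sens1_ge (G := G) (S := S) (p := p) true
  have h2 := sens1_ge (G := G) (S := S) (p := p) false
  have hsplit : (S.filter fun i => p i = true).card + (S.filter fun i => p i = false).card = S.card := by
    have := Finset.card_filter_add_card_filter_not (s := S) (p := fun i => p i = true)
    have he : S.filter (fun i => ¬ p i = true) = S.filter (fun i => p i = false) := by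
      apply Finset.filter_congr; intro i _; simp [Bool.not_eq_true]
    rw [he] at this
    exact this
  omega

end Aux2

section BoolAux
lemma bool_ne_false {b : Bool} (h : ¬ b = false) : b = true := by cases b <;> simp_all
lemma bool_ne_true {b : Bool} (h : ¬ b = true) : b = false := by cases b <;> simp_all
lemma bool_ne {b v : Bool} (h : ¬ b = v) : b = !v := by cases b <;> cases v <;> simp_all
lemma bool_not_ne_self (b : Bool) : (!b) ≠ b := by cases b <;> simp
end BoolAux

section Key
variable {n : ℕ}

lemma key {G : Subgroup (Equiv.Perm (Fin n))} {S : Finset (Fin n)} {p : Fin n → Bool}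
    (hG : IsTransitive G) (hS : S.Nonempty) :
    n ≤ sens0 (mintermFn G S p) * S.card ^ 2 := by
  classical
  set f := mintermFn G S p with hf
  set Gs : Finset (Equiv.Perm (Fin n)) := Finset.univ.filter (· ∈ G) with hGsdef
  have hGs_mem : ∀ π : Equiv.Perm (Fin n), π ∈ Gs ↔ π ∈ G := fun π => by simp [hGsdef]
  -- all fibers of evaluation have equal cardinality
  have fiber_eq : ∀ (s u u' : Fin n),
      (Gs.filter fun π => π s = u).card = (Gs.filter fun π => π s = u').card := by
    intro s u u'
    obtain ⟨σ, hσG, hσ⟩ := hG u u'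
    apply Finset.card_bij' (fun π _ => σ * π) (fun π _ => σ⁻¹ * π)
    · intro π hπ
      simp only [Finset.mem_filter, hGs_mem, Finset.mem_univ, true_and] at hπ ⊢
      exact ⟨mul_mem hσG hπ.1, by simp [Equiv.Perm.mul_apply, hπ.2, hσ]⟩
    · intro π hπ
      simp only [Finset.mem_filter, hGs_mem, Finset.mem_univ, true_and] at hπ ⊢
      refine ⟨mul_mem (inv_mem hσG) hπ.1, ?_⟩
      simp [Equiv.Perm.mul_apply, hπ.2, ← hσ]
    · intro π _
      simp [← mul_assoc]
    · intro π _
      simp [← mul_assoc]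
  have fiber_mul : ∀ (s u : Fin n), (Gs.filter fun π => π s = u).card * n = Gs.card := by
    intro s u
    have hsum : Gs.card = ∑ u' : Fin n, (Gs.filter fun π => π s = u').card :=
      Finset.card_eq_sum_card_fiberwise (fun π _ => Finset.mem_univ (π s))
    have hconst : ∑ u' : Fin n, (Gs.filter fun π => π s = u').card
        = ∑ _u' : Fin n, (Gs.filter fun π => π s = u).card :=
      Finset.sum_congr rfl (fun u' _ => fiber_eq s u' u)
    rw [hsum, hconst, Finset.sum_const, Finset.card_univ, Fintype.card_fin, smul_eq_mul,
      mul_comm]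
  have hGs_pos : 0 < Gs.card := Finset.card_pos.mpr ⟨1, (hGs_mem 1).mpr (one_mem G)⟩
  -- maximal pairwise disjoint family of translates
  set 𝒯 : Finset (Finset (Fin n)) := Gs.image (fun π : Equiv.Perm (Fin n) => S.image ⇑π) with h𝒯
  have hPne : (𝒯.powerset.filter fun F : Finset (Finset (Fin n)) =>
      (F : Set (Finset (Fin n))).PairwiseDisjoint id).Nonempty := ⟨∅, by simp⟩
  obtain ⟨F, hFmem, hFmax⟩ := Finset.exists_max_image _ Finset.card hPne
  simp only [Finset.mem_filter, Finset.mem_powerset] at hFmem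
  obtain ⟨hF𝒯, hFdisj⟩ := hFmem
  set U : Finset (Fin n) := F.biUnion id with hU
  have hTsub : ∀ T ∈ F, T ⊆ U := fun T hT => Finset.subset_biUnion_of_mem id hT
  have hTcard : ∀ T ∈ 𝒯, T.card = S.card := by
    intro T hT
    simp only [h𝒯, Finset.mem_image] at hT
    obtain ⟨π, _, rfl⟩ := hT
    exact Finset.card_image_of_injective _ (Equiv.injective π)
  have hUcard : U.card ≤ F.card * S.card := by
    calc U.card ≤ ∑ T ∈ F, (id T).card := Finset.card_biUnion_le
      _ = ∑ T ∈ F, S.card := Finset.sum_congr rfl (fun T hT => hTcard T (hF𝒯 hT))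
      _ = F.card * S.card := by rw [Finset.sum_const, smul_eq_mul]
  -- every translate meets U
  have hmeets : ∀ T ∈ 𝒯, (T ∩ U).Nonempty := by
    intro T hT
    by_cases hTF : T ∈ F
    · have hTne : T.Nonempty := Finset.card_pos.mp (by
        rw [hTcard T hT]; exact Finset.card_pos.mpr hS)
      obtain ⟨a, ha⟩ := hTne
      exact ⟨a, Finset.mem_inter.mpr ⟨ha, hTsub T hTF ha⟩⟩
    · by_contra hcon
      rw [Finset.not_nonempty_iff_eq_empty] at hcon
      have hdisjU : Disjoint T U := Finset.disjoint_iff_inter_eq_empty.mpr hcon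
      have hins : insert T F ∈ 𝒯.powerset.filter fun F : Finset (Finset (Fin n)) =>
          (F : Set (Finset (Fin n))).PairwiseDisjoint id := by
        simp only [Finset.mem_filter, Finset.mem_powerset]
        constructor
        · exact Finset.insert_subset hT hF𝒯
        · rw [Finset.coe_insert]
          apply hFdisj.insert
          intro T' hT' _
          exact hdisjU.mono_right (hTsub T' hT')
      have := hFmax _ hins
      rw [Finset.card_insert_of_notMem hTF] at this
      omega
  -- double counting: n ≤ U.card * S.card
  have hcount : Gs.card * n ≤ U.card * S.card * Gs.card := by
    have h1 : Gs.card ≤ ∑ π ∈ Gs, (U.filter fun u => u ∈ S.image ⇑π).card := by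
      calc Gs.card = ∑ _π ∈ Gs, 1 := by rw [Finset.sum_const, smul_eq_mul, mul_one]
        _ ≤ _ := by
            apply Finset.sum_le_sum
            intro π hπ
            have := hmeets (S.image ⇑π) (Finset.mem_image_of_mem (fun π : Equiv.Perm (Fin n) => S.image ⇑π) hπ)
            obtain ⟨a, ha⟩ := this
            rw [Finset.mem_inter] at ha
            exact Finset.card_pos.mpr ⟨a, Finset.mem_filter.mpr ⟨ha.2, ha.1⟩⟩
    have h2 : ∑ π ∈ Gs, (U.filter fun u => u ∈ S.image ⇑π).card
        = ∑ u ∈ U, (Gs.filter fun π : Equiv.Perm (Fin n) => u ∈ S.image ⇑π).card := by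
      simp only [Finset.card_filter]
      exact Finset.sum_comm
    have h3 : ∀ u, (Gs.filter fun π : Equiv.Perm (Fin n) => u ∈ S.image ⇑π).card
        ≤ ∑ s ∈ S, (Gs.filter fun π => π s = u).card := by
      intro u
      calc (Gs.filter fun π : Equiv.Perm (Fin n) => u ∈ S.image ⇑π).card
          ≤ (S.biUnion fun s => Gs.filter fun π => π s = u).card := by
            apply Finset.card_le_card
            intro π hπ
            simp only [Finset.mem_filter, Finset.mem_image] at hπ
            obtain ⟨hπG, s, hsS, hsu⟩ := hπ
            exact Finset.mem_biUnion.mpr ⟨s, hsS, Finset.mem_filter.mpr ⟨hπG, hsu⟩⟩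
        _ ≤ _ := Finset.card_biUnion_le
    calc Gs.card * n = (∑ _π ∈ Gs, 1) * n := by
            rw [Finset.sum_const, smul_eq_mul, mul_one]
      _ ≤ (∑ u ∈ U, ∑ s ∈ S, (Gs.filter fun π => π s = u).card) * n := by
            apply Nat.mul_le_mul_right
            calc ∑ _π ∈ Gs, 1 = Gs.card := by rw [Finset.sum_const, smul_eq_mul, mul_one]
              _ ≤ ∑ u ∈ U, (Gs.filter fun π : Equiv.Perm (Fin n) => u ∈ S.image ⇑π).card := h1.trans_eq h2
              _ ≤ _ := Finset.sum_le_sum (fun u _ => h3 u)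
      _ = ∑ u ∈ U, ∑ s ∈ S, (Gs.filter fun π => π s = u).card * n := by
            rw [Finset.sum_mul]
            exact Finset.sum_congr rfl fun u _ => by rw [Finset.sum_mul]
      _ = ∑ u ∈ U, ∑ s ∈ S, Gs.card := by
            exact Finset.sum_congr rfl fun u _ => Finset.sum_congr rfl fun s _ => fiber_mul s u
      _ = U.card * S.card * Gs.card := by
            simp [Finset.sum_const, smul_eq_mul, mul_assoc]
  have hnUS : n ≤ U.card * S.card := by
    have h2 : Gs.card * n ≤ Gs.card * (U.card * S.card) := by
      calc Gs.card * n ≤ U.card * S.card * Gs.card := hcount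
        _ = Gs.card * (U.card * S.card) := by ring
    exact Nat.le_of_mul_le_mul_left h2 hGs_pos
  have hnF : n ≤ F.card * S.card ^ 2 := by
    calc n ≤ U.card * S.card := hnUS
      _ ≤ F.card * S.card * S.card := Nat.mul_le_mul_right _ hUcard
      _ = F.card * S.card ^ 2 := by ring
  -- now construct a 0-input with F.card sensitive bits
  have hFs0 : F.card ≤ sens0 f := by
    have hchoose : ∀ T ∈ F, ∃ π, π ∈ G ∧ S.image ⇑π = T := by
      intro T hT
      have hT𝒯 := hF𝒯 hT
      simp only [h𝒯, Finset.mem_image] at hT𝒯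
      obtain ⟨π, hπGs, him⟩ := hT𝒯
      exact ⟨π, (hGs_mem π).mp hπGs, him⟩
    choose φ hφG hφim using hchoose
    set v : Bool := p hS.choose with hv
    set O : Finset (Fin n) := F.attach.biUnion
      (fun T => (S.filter fun i => p i = v).image ⇑(φ T.1 T.2)) with hO
    have hOsub : ∀ (T) (hT : T ∈ F), ((S.filter fun i => p i = v).image ⇑(φ T hT)) ⊆ T := by
      intro T hT
      calc ((S.filter fun i => p i = v).image ⇑(φ T hT))
          ⊆ S.image ⇑(φ T hT) := Finset.image_subset_image (Finset.filter_subset _ _)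
        _ = T := hφim T hT
    set X : Finset (Fin n → Bool) := Finset.univ.filter
      (fun x => f x = false ∧ ∀ a, a ∉ O → x a = !v) with hX
    have hXne : X.Nonempty := by
      refine ⟨fun _ => !v, ?_⟩
      simp only [hX, Finset.mem_filter, Finset.mem_univ, true_and]
      refine ⟨?_, fun a _ => trivial⟩
      by_contra hcon
      have htrue : f (fun _ => !v) = true := bool_ne_false hcon
      rw [hf, mintermFn_eq_true_iff] at htrue
      obtain ⟨π, hπ, hπ2⟩ := htrue
      have hbad := hπ2 hS.choose hS.choose_spec
      rw [← hv] at hbad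
      exact bool_not_ne_self v hbad
    obtain ⟨x, hxX, hxmax⟩ :=
      X.exists_max_image (fun x => (O.filter fun a => x a = v).card) hXne
    have hxX' := hxX
    simp only [hX, Finset.mem_filter, Finset.mem_univ, true_and] at hxX'
    obtain ⟨hxf, hxsupp⟩ := hxX'
    have hblock : ∀ (T) (hT : T ∈ F), ∃ a ∈ (S.filter fun i => p i = v).image ⇑(φ T hT),
        x a = !v ∧ f (flipBit x a) = true := by
      intro T hT
      have step1 : ∃ a ∈ (S.filter fun i => p i = v).image ⇑(φ T hT), x a ≠ v := by
        by_contra hcon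
        push_neg at hcon
        have htrue : f x = true := by
          rw [hf, mintermFn_eq_true_iff]
          refine ⟨φ T hT, hφG T hT, ?_⟩
          intro i hi
          by_cases hpi : p i = v
          · rw [hpi]
            exact hcon _ (Finset.mem_image_of_mem _ (Finset.mem_filter.mpr ⟨hi, hpi⟩))
          · have hnotv : p i = !v := bool_ne hpi
            have hnotO : (φ T hT) i ∉ O := by
              intro hmem
              simp only [hO, Finset.mem_biUnion, Finset.mem_attach, true_and] at hmem
              obtain ⟨T', hmem'⟩ := hmem
              obtain ⟨T1, hT1⟩ := T'
              by_cases hTT : T1 = T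
              · subst hTT
                obtain ⟨j, hj, hje⟩ := Finset.mem_image.mp hmem'
                rw [Subsingleton.elim hT1 hT] at hje
                have hij : j = i := Equiv.injective _ hje
                rw [hij] at hj
                simp only [Finset.mem_filter] at hj
                exact hpi hj.2
              · have h1 : (φ T hT) i ∈ T := by
                  have hh := Finset.mem_image_of_mem (⇑(φ T hT)) hi
                  rwa [hφim T hT] at hh
                have h2 : (φ T hT) i ∈ T1 := hOsub T1 hT1 hmem'
                exact (Finset.disjoint_left.mp
                  (hFdisj (Finset.mem_coe.mpr hT) (Finset.mem_coe.mpr hT1)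
                    (fun h => hTT h.symm)) h1) h2
            rw [hxsupp _ hnotO, hnotv]
        rw [hxf] at htrue; exact Bool.false_ne_true htrue
      obtain ⟨a, haim, hav⟩ := step1
      have hanotv : x a = !v := bool_ne hav
      refine ⟨a, haim, hanotv, ?_⟩
      by_contra hcon
      have hflipfalse : f (flipBit x a) = false := bool_ne_true hcon
      have haO : a ∈ O := by
        simp only [hO, Finset.mem_biUnion]
        exact ⟨⟨T, hT⟩, Finset.mem_attach _ _, haim⟩
      have hflipX : flipBit x a ∈ X := by
        simp only [hX, Finset.mem_filter, Finset.mem_univ, true_and]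
        refine ⟨hflipfalse, ?_⟩
        intro b hb
        have hba : b ≠ a := fun h => hb (h ▸ haO)
        simp only [flipBit, if_neg hba]
        exact hxsupp b hb
      have hlt : (O.filter fun b => x b = v).card
          < (O.filter fun b => flipBit x a b = v).card := by
        apply Finset.card_lt_card
        constructor
        · intro b hbmem
          simp only [Finset.mem_filter] at hbmem ⊢
          have hba : b ≠ a := by
            rintro rfl
            rw [hbmem.2] at hanotv
            exact bool_not_ne_self v hanotv.symm
          refine ⟨hbmem.1, ?_⟩
          simp only [flipBit, if_neg hba]
          exact hbmem.2
        · intro hsub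
          have hmem : a ∈ O.filter fun b => flipBit x a b = v := by
            simp only [Finset.mem_filter]
            refine ⟨haO, ?_⟩
            show (if a = a then !x a else x a) = v
            rw [if_pos rfl, hanotv, Bool.not_not]
          have hmem2 := hsub hmem
          simp only [Finset.mem_filter] at hmem2
          rw [hmem2.2] at hanotv
          exact bool_not_ne_self v hanotv.symm
      exact absurd (hxmax _ hflipX) (by omega)
    choose aT haTim haTv haTflip using hblock
    have hxf0 : x ∈ Finset.univ.filter (fun y => f y = false) := by
      simp only [Finset.mem_filter, Finset.mem_univ, true_and]; exact hxf
    have hcard : F.card ≤ sensAt f x := by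
      have hinj : ∀ T hT T' hT', aT T hT = aT T' hT' → T = T' := by
        intro T hT T' hT' he
        by_contra hne
        have h1 : aT T hT ∈ T := hOsub T hT (haTim T hT)
        have h2 : aT T hT ∈ T' := he ▸ hOsub T' hT' (haTim T' hT')
        exact (Finset.disjoint_left.mp
          (hFdisj (Finset.mem_coe.mpr hT) (Finset.mem_coe.mpr hT') hne) h1) h2
      have hsubs : F.attach.image (fun T => aT T.1 T.2)
          ⊆ Finset.univ.filter fun i => f (flipBit x i) ≠ f x := by
        intro a ha
        simp only [Finset.mem_image] at ha
        obtain ⟨T, _, rfl⟩ := ha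
        simp only [Finset.mem_filter, Finset.mem_univ, true_and]
        rw [haTflip T.1 T.2, hxf]; simp
      calc F.card = F.attach.card := (Finset.card_attach).symm
        _ = (F.attach.image (fun T => aT T.1 T.2)).card := by
            refine (Finset.card_image_of_injOn ?_).symm
            intro T _ T' _ he
            exact Subtype.ext (hinj T.1 T.2 T'.1 T'.2 he)
        _ ≤ _ := Finset.card_le_card hsubs
    exact hcard.trans (Finset.le_sup hxf0)
  calc n ≤ F.card * S.card ^ 2 := hnF
    _ ≤ sens0 f * S.card ^ 2 := Nat.mul_le_mul_right _ hFs0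

end Key

/-- For minterm-transitive functions, block sensitivity is `O(s(f)³)`. -/
theorem bsens_le_sens_cubed :
    ∃ C : ℝ, 0 < C ∧
      ∀ (n k : ℕ) (G : Subgroup (Equiv.Perm (Fin n))), IsTransitive G →
        ∀ (S : Finset (Fin n)) (p : Fin n → Bool), S.card = k → 1 ≤ k →
          (bsens (mintermFn G S p) : ℝ) ≤ C * (sens (mintermFn G S p) : ℝ) ^ 3 := by
  refine ⟨4, by norm_num, ?_⟩
  intro n k G hG S p hk hk1
  set f := mintermFn G S p with hf
  have hS : S.Nonempty := Finset.card_pos.mp (by omega)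
  have h1 : bsens f ≤ n := bsens_le f
  have h2 : n ≤ sens0 f * S.card ^ 2 := key hG hS
  have h3 : S.card ≤ 2 * sens1 f := card_le_two_sens1
  have h4 : sens0 f ≤ sens f := sens0_le_sens f
  have h5 : sens1 f ≤ sens f := sens1_le_sens f
  have hcard : S.card ≤ 2 * sens f := h3.trans (by omega)
  have hmul : sens0 f * S.card ^ 2 ≤ sens f * (2 * sens f) ^ 2 :=
    Nat.mul_le_mul h4 (Nat.pow_le_pow_left hcard 2)
  have hnat : bsens f ≤ 4 * sens f ^ 3 := by
    calc bsens f ≤ n := h1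
      _ ≤ sens0 f * S.card ^ 2 := h2
      _ ≤ sens f * (2 * sens f) ^ 2 := hmul
      _ = 4 * sens f ^ 3 := by ring
  calc (bsens f : ℝ) ≤ ((4 * sens f ^ 3 : ℕ) : ℝ) := Nat.cast_le.mpr hnat
    _ = 4 * (sens f : ℝ) ^ 3 := by push_cast; ring
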